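/- If (uⁿ) satisfies the two-step exponential Kahan scheme for damped Burgers, (e^{X₂}u^{n+2} - e^{X₀}uⁿ)/(2Δt) = -D₁[(e^{X₁}u^{n+1})⊙(e^{X₀}uⁿ) + (e^{X₂}u^{n+2})⊙(e^{X₁}u^{n+1})]/4 with X₂ = γΔt/2 = -X₀, X₁ = 0, then the discrete mass Cⁿ = 𝟙ᵀuⁿ satisfies e^{X₂}C^{n+2} = e^{X₀}Cⁿ, i.e., C^{n+2} = e^{-γΔt} Cⁿ. -/
import Mathlib


open Matrix

/-- The two-step exponential Kahan scheme for damped Burgers dissipates the discrete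
mass exactly: `C^{n+2} = exp (-γΔt) Cⁿ`. -/
theorem stmt17 (M : ℕ) (hM : 3 ≤ M) (γ Δt : ℝ) (hΔt : Δt ≠ 0)
    (D1 : Matrix (Fin M) (Fin M) ℝ)
    (hones : ∀ v : Fin M → ℝ, (1 : Fin M → ℝ) ⬝ᵥ D1.mulVec v = 0)
    (u : ℕ → Fin M → ℝ)
    (hscheme : ∀ n : ℕ,
      (1/(2*Δt)) • (Real.exp (γ*Δt/2) • u (n+2) - Real.exp (-(γ*Δt)/2) • u n)
        = -(1/4 : ℝ) • D1.mulVec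
            (u (n+1) * (Real.exp (-(γ*Δt)/2) • u n)
              + (Real.exp (γ*Δt/2) • u (n+2)) * u (n+1))) :
    ∀ n : ℕ, (1 : Fin M → ℝ) ⬝ᵥ u (n+2)
      = Real.exp (-(γ*Δt)) * ((1 : Fin M → ℝ) ⬝ᵥ u n) := by
  intro n
  have h := congrArg (fun v => (1 : Fin M → ℝ) ⬝ᵥ v) (hscheme n)
  simp only [dotProduct_smul, dotProduct_sub, hones, mul_zero, smul_eq_mul] at h
  have h2 : Real.exp (γ*Δt/2) * ((1 : Fin M → ℝ) ⬝ᵥ u (n+2))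
      = Real.exp (-(γ*Δt)/2) * ((1 : Fin M → ℝ) ⬝ᵥ u n) := by
    have h1 : (1/(2*Δt)) ≠ 0 := by positivity
    have := mul_eq_zero.mp h
    rcases this with h' | h'
    · exact absurd h' h1
    · linarith
  have hexp : Real.exp (γ*Δt/2) * Real.exp (-(γ*Δt)) = Real.exp (-(γ*Δt)/2) := by
    rw [← Real.exp_add]; ring_nf
  apply mul_left_cancel₀ (Real.exp_ne_zero (γ*Δt/2))
  rw [← mul_assoc, hexp]; exact h2
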